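/- Let x, y, a, b be complex numbers, let p > 1 and q be real numbers with 1/p + 1/q = 1, and let μ, ν, λ be nonzero real numbers with μ < 0, ν > 0 and λ < 0. If |λ|^{1/(p-1)} ≤ |μ|^{1/(p-1)}·|a|^q − |ν|^{1/(p-1)}·|b|^q, then |x|^p/μ + |y|^p/ν ≥ |a·x + b·y|^p/λ. -/

import Mathlib

open Real

lemma holder2 {p q : ℝ} (hp : 1 < p) (hpq : 1 / p + 1 / q = 1)
    {A B s t L M N : ℝ} (hA : 0 ≤ A) (hB : 0 ≤ B) (hs : 0 ≤ s) (ht : 0 ≤ t)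
    (hM : 0 < M) (hN : 0 < N) (hL : 0 < L)
    (hcond : M ^ (1 / (p - 1)) * A ^ q + N ^ (1 / (p - 1)) * B ^ q ≤ L ^ (1 / (p - 1))) :
    (A * s + B * t) ^ p ≤ L * (s ^ p / M + t ^ p / N) := by
  have hp0 : (0:ℝ) < p := lt_trans one_pos hp
  have hpm1 : (0:ℝ) < p - 1 := by linarith
  have hq : (p - 1) * q = p := by
    have hp' : p ≠ 0 := hp0.ne'
    have hq0 : q ≠ 0 := by
      intro h0
      rw [h0] at hpq
      simp at hpq
      nlinarith [hpq]
    field_simp at hpq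
    nlinarith [hpq]
  have hq1 : 1 < q := by nlinarith
  have hq0 : (0:ℝ) < q := lt_trans one_pos hq1
  have hconj : Real.HolderConjugate p q := ⟨by rw [inv_one, ← one_div, ← one_div]; exact hpq, hp0, hq0⟩
  have key := Real.inner_le_Lp_mul_Lq_of_nonneg (s := (Finset.univ : Finset (Fin 2)))
    (f := ![s * M ^ (-(1/p)), t * N ^ (-(1/p))]) (g := ![A * M ^ (1/p), B * N ^ (1/p)])
    hconj (by intro i _; fin_cases i <;> simp <;> positivity)
    (by intro i _; fin_cases i <;> simp <;> positivity)
  simp only [Fin.sum_univ_two, Matrix.cons_val_zero, Matrix.cons_val_one, Matrix.head_cons] at key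
  have hMip : M ^ (-(1/p)) * (M ^ ((1:ℝ)/p)) = 1 := by
    rw [← Real.rpow_add hM]; norm_num
  have hNip : N ^ (-(1/p)) * (N ^ ((1:ℝ)/p)) = 1 := by
    rw [← Real.rpow_add hN]; norm_num
  have e1 : s * M ^ (-(1/p)) * (A * M ^ ((1:ℝ)/p)) = A * s := by
    calc s * M ^ (-(1/p)) * (A * M ^ ((1:ℝ)/p))
        = A * s * (M ^ (-(1/p)) * M ^ ((1:ℝ)/p)) := by ring
      _ = A * s := by rw [hMip, mul_one]
  have e2 : t * N ^ (-(1/p)) * (B * N ^ ((1:ℝ)/p)) = B * t := by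
    calc t * N ^ (-(1/p)) * (B * N ^ ((1:ℝ)/p))
        = B * t * (N ^ (-(1/p)) * N ^ ((1:ℝ)/p)) := by ring
      _ = B * t := by rw [hNip, mul_one]
  have hexp1 : (-(1/p)) * p = -1 := by field_simp
  have e3 : ∀ z : ℝ, 0 ≤ z → ∀ W : ℝ, 0 < W → (z * W ^ (-(1/p))) ^ p = z ^ p / W := by
    intro z hz W hW
    rw [Real.mul_rpow hz (Real.rpow_nonneg hW.le _), ← Real.rpow_mul hW.le, hexp1,
      Real.rpow_neg_one, div_eq_mul_inv]
  have hexp2 : (1/p) * q = 1 / (p - 1) := by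
    rw [div_mul_eq_mul_div, one_mul, div_eq_div_iff hp0.ne' (sub_ne_zero.2 hp.ne')]
    linarith [hq]
  have e4 : ∀ z : ℝ, 0 ≤ z → ∀ W : ℝ, 0 < W →
      (z * W ^ ((1:ℝ)/p)) ^ q = W ^ (1/(p-1)) * z ^ q := by
    intro z hz W hW
    rw [Real.mul_rpow hz (Real.rpow_nonneg hW.le _), ← Real.rpow_mul hW.le, hexp2, mul_comm]
  rw [e1, e2, e3 s hs M hM, e3 t ht N hN, e4 A hA M hM, e4 B hB N hN] at key
  set D := s ^ p / M + t ^ p / N with hD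
  have hDnn : 0 ≤ D := by positivity
  have hCnn : 0 ≤ M ^ (1/(p-1)) * A ^ q + N ^ (1/(p-1)) * B ^ q := by positivity
  have hC : (M ^ (1/(p-1)) * A ^ q + N ^ (1/(p-1)) * B ^ q) ^ ((1:ℝ)/q) ≤ L ^ ((1:ℝ)/p) := by
    calc (M ^ (1/(p-1)) * A ^ q + N ^ (1/(p-1)) * B ^ q) ^ ((1:ℝ)/q)
        ≤ (L ^ ((1:ℝ)/(p-1))) ^ ((1:ℝ)/q) :=
          Real.rpow_le_rpow hCnn hcond (by positivity)
      _ = L ^ ((1:ℝ)/p) := by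
          rw [← Real.rpow_mul hL.le]
          congr 1
          rw [div_mul_div_comm, one_mul, hq]
  have step : A * s + B * t ≤ D ^ ((1:ℝ)/p) * L ^ ((1:ℝ)/p) := by
    refine le_trans key ?_
    exact mul_le_mul_of_nonneg_left hC (Real.rpow_nonneg hDnn _)
  have hABst : 0 ≤ A * s + B * t := by positivity
  calc (A * s + B * t) ^ p ≤ (D ^ ((1:ℝ)/p) * L ^ ((1:ℝ)/p)) ^ p :=
        Real.rpow_le_rpow hABst step hp0.le
    _ = L * D := by
        rw [← Real.mul_rpow hDnn hL.le, ← Real.rpow_mul (by positivity),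
          one_div_mul_cancel hp0.ne', Real.rpow_one, mul_comm]

/-- Theorem 1 (ii): Euler–Lagrange / Bohr type inequality for complex numbers,
case μ < 0, ν > 0, λ < 0. -/
theorem bohr_type_complex_case_ii (x y a b : ℂ) (p q : ℝ) (hp : 1 < p)
    (hpq : 1 / p + 1 / q = 1) (μ ν lam : ℝ) (hμ : μ < 0) (hν : 0 < ν) (hlam : lam < 0)
    (h : |lam| ^ (1 / (p - 1)) ≤
      |μ| ^ (1 / (p - 1)) * ‖a‖ ^ q - |ν| ^ (1 / (p - 1)) * ‖b‖ ^ q) :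
    ‖x‖ ^ p / μ + ‖y‖ ^ p / ν ≥ ‖a * x + b * y‖ ^ p / lam := by
  have hp0 : (0:ℝ) < p := lt_trans one_pos hp
  have hpm1 : (0:ℝ) < p - 1 := by linarith
  have hq : (p - 1) * q = p := by
    have hp' : p ≠ 0 := hp0.ne'
    have hq0 : q ≠ 0 := by
      intro h0
      rw [h0] at hpq
      simp at hpq
      nlinarith [hpq]
    field_simp at hpq
    nlinarith [hpq]
  have hq1 : 1 < q := by nlinarith
  have hq0 : (0:ℝ) < q := lt_trans one_pos hq1
  have hlamabs : (0:ℝ) < |lam| := abs_pos.2 hlam.ne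
  have hμabs : (0:ℝ) < |μ| := abs_pos.2 hμ.ne
  have hνabs : |ν| = ν := abs_of_pos hν
  rw [hνabs] at h
  -- a ≠ 0
  have ha : a ≠ 0 := by
    intro ha0
    rw [ha0] at h
    simp only [norm_zero] at h
    rw [Real.zero_rpow hq0.ne'] at h
    have h1 : (0:ℝ) < |lam| ^ (1/(p-1)) := Real.rpow_pos_of_pos hlamabs _
    have h2 : (0:ℝ) ≤ ν ^ (1/(p-1)) * ‖b‖ ^ q := by positivity
    nlinarith
  have haabs : (0:ℝ) < ‖a‖ := by
    simpa using (norm_pos_iff.mpr ha)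
  set u := a * x + b * y with hu
  -- triangle inequality: |x| <= (1/|a|) |u| + (|b|/|a|) |y|
  have hx : x = (u - b * y) / a := by
    rw [eq_div_iff ha, hu]; ring
  have htri : ‖x‖ ≤
      (1 / ‖a‖) * ‖u‖ + (‖b‖ / ‖a‖) * ‖y‖ := by
    rw [hx, norm_div, div_le_iff₀ haabs]
    calc ‖u - b * y‖ ≤ ‖u‖ + ‖b * y‖ :=
          norm_sub_le u (b * y)
      _ = ((1 / ‖a‖) * ‖u‖ + (‖b‖ / ‖a‖) * ‖y‖)
            * ‖a‖ := by
          rw [norm_mul]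
          field_simp
  -- Hölder condition for the rearranged inequality
  have hcond : |lam| ^ (1/(p-1)) * (1 / ‖a‖) ^ q
      + ν ^ (1/(p-1)) * (‖b‖ / ‖a‖) ^ q ≤ |μ| ^ (1/(p-1)) := by
    rw [Real.div_rpow (norm_nonneg b) haabs.le, Real.div_rpow zero_le_one haabs.le,
      Real.one_rpow]
    rw [mul_div_assoc', mul_div_assoc', ← add_div, div_le_iff₀ (by positivity)]
    rw [mul_one]
    linarith [h]
  -- core bound
  have hkey : ‖x‖ ^ p ≤
      |μ| * (‖u‖ ^ p / |lam| + ‖y‖ ^ p / ν) := by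
    calc ‖x‖ ^ p
        ≤ ((1 / ‖a‖) * ‖u‖ + (‖b‖ / ‖a‖) * ‖y‖) ^ p :=
          Real.rpow_le_rpow (norm_nonneg x) htri hp0.le
      _ ≤ |μ| * (‖u‖ ^ p / |lam| + ‖y‖ ^ p / ν) :=
          holder2 hp hpq (by positivity) (by positivity) (norm_nonneg u)
            (norm_nonneg y) hlamabs hν hμabs hcond
  -- conclude
  rw [abs_of_neg hμ, abs_of_neg hlam, div_neg] at hkey
  set X := ‖x‖ ^ p with hX
  set Y := ‖y‖ ^ p with hY
  set U := ‖u‖ ^ p with hU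
  have hstep : U / lam - Y / ν ≤ X / μ := by
    rw [le_div_iff_of_neg hμ]
    calc X ≤ -μ * (-(U / lam) + Y / ν) := hkey
      _ = (U / lam - Y / ν) * μ := by ring
  rw [ge_iff_le]
  linarith
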